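/- Fix a base b > 1 and let C_{t+1} be the value of the Morris counter after t ≥ 0 increment operations. Then the count estimate is unbiased: E[ τ̃(C_{t+1}) ] = E[ (b^{C_{t+1}} − b)/(b − 1) ] = t. Equivalently, at each step E[ b^{C_{t+1}} | C_1, …, C_t ] = b^{C_t} + (b − 1) almost surely. -/

import Mathlib

open MeasureTheory ProbabilityTheory

/-- Unbiasedness of the Morris counter: after `t ≥ 0` increments with base `b > 1`, the
estimate `τ̃(C_{t+1}) = (b^{C_{t+1}} - b)/(b - 1)` satisfies `E[τ̃(C_{t+1})] = t`;
equivalently, at each step `E[b^{C_{s+1}} | C_1, …, C_s] = b^{C_s} + (b - 1)` a.s. -/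
theorem morris_counter_unbiased
    {Ω : Type*} [MeasurableSpace Ω] (P : Measure Ω) [IsProbabilityMeasure P]
    (b : ℝ) (hb : 1 < b) (t : ℕ)
    (V : ℕ → Ω → ℝ) (hVmeas : ∀ s, Measurable (V s))
    (hVindep : iIndepFun V P)
    (hVunif : ∀ s, P.map (V s) = volume.restrict (Set.Icc (0 : ℝ) 1))
    (C : ℕ → Ω → ℕ) (hCmeas : ∀ s, Measurable (C s))
    (hC1 : ∀ ω, C 1 ω = 1)
    (hCstep : ∀ s, 1 ≤ s → ∀ ω,
      C (s + 1) ω = if V s ω < (b ^ C s ω)⁻¹ then C s ω + 1 else C s ω) :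
    (∫ ω, (b ^ C (t + 1) ω - b) / (b - 1) ∂P) = t ∧
      ∀ s, 1 ≤ s →
        P[(fun ω => b ^ C (s + 1) ω) |
            MeasurableSpace.comap (fun ω => fun j : Fin s => C (j.val + 1) ω) inferInstance]
          =ᵐ[P] fun ω => b ^ C s ω + (b - 1) := by
  classical
  have hb0 : (0:ℝ) < b := lt_trans one_pos hb
  have hb1 : (0:ℝ) < b - 1 := sub_pos.2 hb
  set mV : ℕ → MeasurableSpace Ω :=
    fun s => ⨆ i ∈ Set.Ico 1 s, MeasurableSpace.comap (V i) inferInstance with hmVdef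
  have hmV_le : ∀ s, mV s ≤ ‹MeasurableSpace Ω› := by
    intro s
    refine iSup_le fun i => iSup_le fun _ => (hVmeas i).comap_le
  have hmV_mono : ∀ {s s' : ℕ}, s ≤ s' → mV s ≤ mV s' := by
    intro s s' h
    exact biSup_mono fun i hi => ⟨hi.1, lt_of_lt_of_le hi.2 h⟩
  -- range of the counter
  have hCrange : ∀ s, 1 ≤ s → ∀ ω, 1 ≤ C s ω ∧ C s ω ≤ s := by
    intro s hs
    induction s, hs using Nat.le_induction with
    | base => intro ω; simp [hC1 ω]
    | succ s hs ih =>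
      intro ω
      rw [hCstep s hs ω]
      rcases ih ω with ⟨h1, h2⟩
      split <;> omega
  -- measurability of C s w.r.t. mV s
  have hCmV : ∀ s, 1 ≤ s → Measurable[mV s] (C s) := by
    intro s hs
    induction s, hs using Nat.le_induction with
    | base =>
      have : C 1 = fun _ => 1 := funext hC1
      rw [this]; exact measurable_const
    | succ s hs ih =>
      have hfun : C (s+1) = fun ω => if V s ω < (b ^ C s ω)⁻¹ then C s ω + 1 else C s ω :=
        funext (hCstep s hs)
      rw [hfun]
      have hle1 : MeasurableSpace.comap (V s) inferInstance ≤ mV (s+1) :=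
        le_biSup (fun i => MeasurableSpace.comap (V i) inferInstance)
          (show s ∈ Set.Ico 1 (s+1) from ⟨hs, Nat.lt_succ_self s⟩)
      have hVs : Measurable[mV (s+1)] (V s) := measurable_iff_comap_le.2 hle1
      have hCs : Measurable[mV (s+1)] (C s) := ih.mono (hmV_mono (Nat.le_succ s)) le_rfl
      have hg : Measurable[mV (s+1)] fun ω => (b ^ C s ω)⁻¹ :=
        (Measurable.of_discrete (f := fun n : ℕ => ((b:ℝ) ^ n)⁻¹)).comp hCs
      have hset : MeasurableSet[mV (s+1)] {ω | V s ω < (b ^ C s ω)⁻¹} :=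
        measurableSet_lt hVs hg
      exact Measurable.ite hset (hCs.add measurable_const) hCs
  -- independence of V s from mV s
  have hIndepVs : ∀ s, ∀ c : ℝ, ∀ A : Set Ω, MeasurableSet[mV s] A →
      P ({ω | V s ω < c} ∩ A) = P {ω | V s ω < c} * P A := by
    intro s c A hA
    have hind := indep_biSup_compl (fun n => (hVmeas n).comap_le) hVindep {s}
    have h1 : MeasurableSet[⨆ n ∈ ({s} : Set ℕ), MeasurableSpace.comap (V n) inferInstance]
        {ω | V s ω < c} := by
      have hm : MeasurableSet[MeasurableSpace.comap (V s) inferInstance] {ω | V s ω < c} :=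
        ⟨Set.Iio c, measurableSet_Iio, rfl⟩
      exact (le_biSup (fun n => MeasurableSpace.comap (V n) inferInstance)
        (Set.mem_singleton s)) _ hm
    have h2 : MeasurableSet[⨆ n ∈ (({s} : Set ℕ)ᶜ),
        MeasurableSpace.comap (V n) inferInstance] A := by
      have hle : mV s ≤ ⨆ n ∈ (({s} : Set ℕ)ᶜ), MeasurableSpace.comap (V n) inferInstance :=
        biSup_mono fun i hi => Set.mem_compl_singleton_iff.mpr (Nat.ne_of_lt hi.2)
      exact hle _ hA
    exact (Indep_iff _ _ _).1 hind _ _ h1 h2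
  -- uniform distribution of V s
  have hUnif : ∀ s, ∀ c : ℝ, 0 ≤ c → c ≤ 1 → P {ω | V s ω < c} = ENNReal.ofReal c := by
    intro s c hc0 hc1
    have hpre : {ω | V s ω < c} = V s ⁻¹' Set.Iio c := rfl
    rw [hpre, ← Measure.map_apply (hVmeas s) measurableSet_Iio, hVunif s,
      Measure.restrict_apply measurableSet_Iio]
    have hset : Set.Iio c ∩ Set.Icc (0:ℝ) 1 = Set.Ico 0 c := by
      ext x
      simp only [Set.mem_inter_iff, Set.mem_Iio, Set.mem_Icc, Set.mem_Ico]
      constructor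
      · rintro ⟨h1, h2, _⟩; exact ⟨h2, h1⟩
      · rintro ⟨h1, h2⟩; exact ⟨h2, h1, le_trans (le_of_lt h2) hc1⟩
    rw [hset, Real.volume_Ico, sub_zero]
  -- integrability
  have hInt : ∀ s, 1 ≤ s → Integrable (fun ω => b ^ C s ω) P := by
    intro s hs
    have hmeas : Measurable fun ω => b ^ C s ω :=
      (Measurable.of_discrete (f := fun n : ℕ => (b:ℝ) ^ n)).comp (hCmeas s)
    refine (integrable_const (b ^ s)).mono' hmeas.aestronglyMeasurable ?_
    refine Filter.Eventually.of_forall fun ω => ?_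
    rw [Real.norm_eq_abs, abs_of_pos (pow_pos hb0 _)]
    exact pow_le_pow_right₀ (le_of_lt hb) (hCrange s hs ω).2
  -- the key one-step set-integral identity
  have hKey : ∀ s, 1 ≤ s → ∀ A : Set Ω, MeasurableSet[mV s] A →
      ∫ ω in A, b ^ C (s+1) ω ∂P = (∫ ω in A, b ^ C s ω ∂P) + (b - 1) * (P A).toReal := by
    intro s hs A hA
    have hAmeas : MeasurableSet A := hmV_le s _ hA
    set E : ℕ → Set Ω := fun n => {ω | C s ω = n} ∩ {ω | V s ω < (b ^ n)⁻¹} with hEdef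
    have hCn : ∀ n : ℕ, MeasurableSet {ω | C s ω = n} := by
      intro n
      exact hCmeas s (MeasurableSet.singleton n)
    have hEmeas : ∀ n, MeasurableSet (E n) := fun n =>
      (hCn n).inter (measurableSet_lt (hVmeas s) measurable_const)
    have hpt : ∀ ω, (b:ℝ) ^ C (s+1) ω =
        b ^ C s ω + ∑ n ∈ Finset.Icc 1 s, Set.indicator (E n) (fun _ => (b-1) * b ^ n) ω := by
      intro ω
      have hm1 : 1 ≤ C s ω := (hCrange s hs ω).1
      have hm2 : C s ω ≤ s := (hCrange s hs ω).2
      rw [Finset.sum_eq_single (C s ω)]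
      · rw [hCstep s hs ω]
        by_cases h : V s ω < (b ^ C s ω)⁻¹
        · rw [if_pos h]
          have hmem : ω ∈ E (C s ω) := ⟨rfl, h⟩
          rw [Set.indicator_of_mem hmem, pow_succ]
          ring
        · rw [if_neg h]
          have hnot : ω ∉ E (C s ω) := fun hω => h hω.2
          rw [Set.indicator_of_notMem hnot, add_zero]
      · intro n _ hn
        exact Set.indicator_of_notMem (fun hω => hn (hω.1.symm)) _
      · intro h
        exact absurd (Finset.mem_Icc.2 ⟨hm1, hm2⟩) h
    calc ∫ ω in A, b ^ C (s+1) ω ∂P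
        = ∫ ω in A, (b ^ C s ω
            + ∑ n ∈ Finset.Icc 1 s, Set.indicator (E n) (fun _ => (b-1) * b ^ n) ω) ∂P :=
          integral_congr_ae (Filter.Eventually.of_forall fun ω => hpt ω)
      _ = (∫ ω in A, b ^ C s ω ∂P)
            + ∑ n ∈ Finset.Icc 1 s, ∫ ω in A, Set.indicator (E n) (fun _ => (b-1) * b ^ n) ω ∂P := by
          rw [integral_add ((hInt s hs).integrableOn)
            (integrable_finset_sum _ fun n _ =>
              ((integrable_const _).indicator (hEmeas n)).integrableOn),
            integral_finset_sum _ fun n _ =>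
              ((integrable_const _).indicator (hEmeas n))]
      _ = (∫ ω in A, b ^ C s ω ∂P)
            + ∑ n ∈ Finset.Icc 1 s, (b - 1) * (P ({ω | C s ω = n} ∩ A)).toReal := by
          congr 1
          refine Finset.sum_congr rfl fun n _ => ?_
          rw [setIntegral_indicator (hEmeas n), setIntegral_const]
          have hrearr : A ∩ E n = {ω | V s ω < (b ^ n)⁻¹} ∩ ({ω | C s ω = n} ∩ A) := by
            ext ω
            constructor
            · rintro ⟨ha, h1, h2⟩; exact ⟨h2, h1, ha⟩
            · rintro ⟨h2, h1, ha⟩; exact ⟨ha, h1, h2⟩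
          have hCsetA : MeasurableSet[mV s] ({ω | C s ω = n} ∩ A) :=
            ((hCmV s hs) (MeasurableSet.singleton n)).inter hA
          have hbn0 : (0:ℝ) ≤ (b ^ n)⁻¹ := le_of_lt (inv_pos.2 (pow_pos hb0 n))
          have hbn1 : ((b:ℝ) ^ n)⁻¹ ≤ 1 := inv_le_one_of_one_le₀ (one_le_pow₀ (le_of_lt hb))
          rw [hrearr, measureReal_def, hIndepVs s _ _ hCsetA, hUnif s _ hbn0 hbn1, ENNReal.toReal_mul,
            ENNReal.toReal_ofReal hbn0, smul_eq_mul]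
          have hbne : (b:ℝ) ^ n ≠ 0 := ne_of_gt (pow_pos hb0 n)
          field_simp
      _ = (∫ ω in A, b ^ C s ω ∂P) + (b - 1) * (P A).toReal := by
          congr 1
          rw [← Finset.mul_sum]
          congr 1
          have hdisj : (↑(Finset.Icc 1 s) : Set ℕ).PairwiseDisjoint
              (fun n => {ω | C s ω = n} ∩ A) := by
            intro m _ n _ hmn
            simp only [Function.onFun]
            refine Set.disjoint_left.2 ?_
            rintro ω ⟨h1, _⟩ ⟨h2, _⟩
            exact hmn (h1.symm.trans h2)
          have hunion : A = ⋃ n ∈ Finset.Icc 1 s, ({ω | C s ω = n} ∩ A) := by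
            ext ω
            simp only [Set.mem_iUnion, Set.mem_inter_iff, Set.mem_setOf_eq, exists_prop]
            constructor
            · intro hω
              exact ⟨C s ω, Finset.mem_Icc.2 ⟨(hCrange s hs ω).1, (hCrange s hs ω).2⟩, rfl, hω⟩
            · rintro ⟨n, _, _, hω⟩; exact hω
          rw [← ENNReal.toReal_sum (fun n _ => measure_ne_top P _)]
          congr 1
          calc ∑ n ∈ Finset.Icc 1 s, P ({ω | C s ω = n} ∩ A)
              = P (⋃ n ∈ Finset.Icc 1 s, ({ω | C s ω = n} ∩ A)) :=
                (measure_biUnion_finset hdisj fun n _ => (hCn n).inter hAmeas).symm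
            _ = P A := by rw [← hunion]
  -- the expectation recursion
  have hExp : ∀ u : ℕ, ∫ ω, b ^ C (u+1) ω ∂P = b + (b - 1) * u := by
    intro u
    induction u with
    | zero =>
      have hfun : (fun ω => (b:ℝ) ^ C 1 ω) = fun _ => b := by
        funext ω; rw [hC1 ω, pow_one]
      rw [hfun, integral_const]
      simp
    | succ u ih =>
      have hu1 : 1 ≤ u + 1 := Nat.le_add_left 1 u
      have h := hKey (u+1) hu1 Set.univ MeasurableSet.univ
      rw [setIntegral_univ, setIntegral_univ] at h
      rw [h, ih]
      simp only [measure_univ, ENNReal.toReal_one, mul_one]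
      push_cast
      ring
  constructor
  · have hne : b - 1 ≠ 0 := ne_of_gt hb1
    have hfun : (fun ω => ((b:ℝ) ^ C (t+1) ω - b) / (b-1))
        = fun ω => (b ^ C (t+1) ω - b) * (b-1)⁻¹ := by
      funext ω; rw [div_eq_mul_inv]
    rw [hfun, integral_mul_const,
      integral_sub (hInt (t+1) (Nat.le_add_left 1 t)) (integrable_const b),
      integral_const, hExp t]
    simp only [measureReal_def, measure_univ, ENNReal.toReal_one, one_smul]
    field_simp
    ring
  · intro s hs
    set F : Ω → (Fin s → ℕ) := fun ω => fun j : Fin s => C (j.val + 1) ω with hFdef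
    have hFmeas : Measurable F := measurable_pi_iff.2 fun j => hCmeas _
    have hm : MeasurableSpace.comap F inferInstance ≤ (inferInstance : MeasurableSpace Ω) :=
      hFmeas.comap_le
    have hmle : MeasurableSpace.comap F inferInstance ≤ mV s := by
      have hFm : Measurable[mV s] F := by
        letI : MeasurableSpace Ω := mV s
        refine measurable_pi_iff.2 fun j => ?_
        exact (hCmV (j.val + 1) (Nat.le_add_left 1 j.val)).mono
          (hmV_mono (Nat.succ_le_of_lt j.isLt)) le_rfl
      exact hFm.comap_le
    -- m-measurability of ω ↦ b ^ C s ω + (b - 1)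
    have hFm' : Measurable[MeasurableSpace.comap F inferInstance] F :=
      measurable_iff_comap_le.2 le_rfl
    have hCsm : Measurable[MeasurableSpace.comap F inferInstance] (C s) := by
      have hj : C s = fun ω => F ω ⟨s - 1, by omega⟩ := by
        funext ω
        simp only [hFdef]
        rw [Nat.sub_add_cancel hs]
      rw [hj]
      exact (measurable_pi_apply (⟨s - 1, by omega⟩ : Fin s)).comp hFm'
    have hgm : Measurable[MeasurableSpace.comap F inferInstance]
        fun ω => (b:ℝ) ^ C s ω + (b - 1) :=
      ((Measurable.of_discrete (f := fun n : ℕ => (b:ℝ) ^ n)).comp hCsm).add measurable_const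
    refine (ae_eq_condExp_of_forall_setIntegral_eq hm
      (hInt (s+1) (le_trans hs (Nat.le_succ s))) ?_ ?_ ?_).symm
    · intro A _ _
      exact ((hInt s hs).add (integrable_const (b-1))).integrableOn
    · intro A hA _
      have hAmV : MeasurableSet[mV s] A := hmle _ hA
      calc ∫ ω in A, ((b:ℝ) ^ C s ω + (b - 1)) ∂P
          = (∫ ω in A, b ^ C s ω ∂P) + (b - 1) * (P A).toReal := by
            rw [integral_add ((hInt s hs).integrableOn) (integrable_const _).integrableOn,
              setIntegral_const, measureReal_def, smul_eq_mul, mul_comm]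
        _ = ∫ ω in A, b ^ C (s+1) ω ∂P := (hKey s hs A hAmV).symm
    · exact StronglyMeasurable.aestronglyMeasurable (Measurable.stronglyMeasurable hgm)
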